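/- Let a > b, δ > 0, c_1 ∈ R, and set α = sqrt(a-b), β = sqrt(a-b)·sqrt(1 - e^{-2δ}). Then f(n) = α·e^{δ(n + c_1)} and g(n) = β·Γ_q(-n - c_1 + 3/4)/Γ_q(-n - c_1 + 1/4) with q = e^{-2δ} satisfy f(n)f(n + 1/2) + g(n)g(n + 1/2) = a - b for all n in the domain of definition. -/

import Mathlib

/-- the q-gamma parametrization satisfies
`f(n) f(n + 1/2) + g(n) g(n + 1/2) = a - b`.  Here `G` is a q-gamma function,
i.e. any function satisfying `G(z + 1) = (1 - q^z)/(1 - q) * G z` with `q = e^{-2δ}`. -/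
theorem discrete_qgamma_solution (a b δ c₁ : ℝ) (hab : b < a) (hδ : 0 < δ)
    (q : ℝ) (hq : q = Real.exp (-2 * δ))
    (G : ℝ → ℝ) (hG : ∀ z : ℝ, G (z + 1) = (1 - q ^ z) / (1 - q) * G z)
    (α β : ℝ) (hα : α = Real.sqrt (a - b))
    (hβ : β = Real.sqrt (a - b) * Real.sqrt (1 - Real.exp (-2 * δ)))
    (f g : ℝ → ℝ)
    (hf : ∀ n, f n = α * Real.exp (δ * (n + c₁)))
    (hg : ∀ n, g n = β * G (-n - c₁ + 3 / 4) / G (-n - c₁ + 1 / 4))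
    (n : ℝ)
    (h1 : G (-n - c₁ + 1 / 4) ≠ 0) (h2 : G (-n - c₁ - 1 / 4) ≠ 0) :
    f n * f (n + 1 / 2) + g n * g (n + 1 / 2) = a - b := by
  have hab' : 0 < a - b := by linarith
  have hq0 : (0 : ℝ) < q := hq ▸ Real.exp_pos _
  have hq1 : q < 1 := by
    rw [hq]
    exact Real.exp_lt_one_iff.mpr (by linarith)
  have h1q : 0 < 1 - q := by linarith
  have hα2 : α * α = a - b := by
    rw [hα, Real.mul_self_sqrt hab'.le]
  have hβ2 : β * β = (a - b) * (1 - q) := by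
    rw [hβ, hq] at *
    rw [mul_mul_mul_comm, Real.mul_self_sqrt hab'.le, Real.mul_self_sqrt h1q.le]
  have hrpow : q ^ (-n - c₁ - 1/4) = Real.exp (δ * (n + c₁)) * Real.exp (δ * (n + 1/2 + c₁)) := by
    rw [← Real.exp_add, hq, Real.rpow_def_of_pos (Real.exp_pos _), Real.log_exp]
    ring_nf
  have hGstep : G (-n - c₁ + 3/4) = (1 - q ^ (-n - c₁ - 1/4)) / (1 - q) * G (-n - c₁ - 1/4) := by
    have h := hG (-n - c₁ - 1/4)
    rw [show -n - c₁ - 1/4 + 1 = -n - c₁ + 3/4 by ring] at h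
    exact h
  have key : -(n + 1/2) - c₁ + 3/4 = -n - c₁ + 1/4 := by ring
  have key2 : -(n + 1/2) - c₁ + 1/4 = -n - c₁ - 1/4 := by ring
  rw [hf n, hf (n + 1/2), hg n, hg (n + 1/2), key, key2, hGstep]
  set A := G (-n - c₁ + 1/4) with hA
  set C := G (-n - c₁ - 1/4) with hC
  set Q := q ^ (-n - c₁ - 1/4) with hQ
  have hterm : β * ((1 - Q) / (1 - q) * C) / A * (β * A / C) = (a - b) * (1 - Q) := by
    field_simp
    linear_combination (1 - Q) * hβ2
  rw [hterm, hrpow] at *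
  linear_combination (Real.exp (δ * (n + c₁)) * Real.exp (δ * (n + 1 / 2 + c₁))) * hα2
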